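/- Let u₁, ..., u_d be independent with densities π^{(i)} and let f: ℝ^d → ℝ be bounded with f(u) = f(clip(u, α, β)) coordinatewise. For i ≠ j, Cov[f(u) ψ̄^{(i)}(u_i), f(u) ψ̄^{(j)}(u_j)] = Cov[f(u) ψ^{(i)}(u_i), f(u) ψ^{(j)}(u_j)], where ψ^{(i)}(u) = ∇_θ log π_θ^{(i)}(u) and ψ̄^{(i)} is the corresponding CAPG score. -/

import Mathlib

open MeasureTheory Set

/-- Expectation of `g` under a joint density `dens` on `Fin d → ℝ`. -/
noncomputable def Ed {d : ℕ} (dens g : (Fin d → ℝ) → ℝ) : ℝ := ∫ u, g u * dens u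

/-- Covariance of `g₁` and `g₂` under a joint density `dens` on `Fin d → ℝ`. -/
noncomputable def Covd {d : ℕ} (dens g₁ g₂ : (Fin d → ℝ) → ℝ) : ℝ :=
  Ed dens (fun u => g₁ u * g₂ u) - Ed dens g₁ * Ed dens g₂

/-- A one-dimensional tail integral vanishes: if `c * ∫_s q = ∫_s q'` and `ψ q = q'`,
then `∫_s (c - ψ) q = 0`. -/
lemma tail_zero {q q' ψi : ℝ → ℝ} {c : ℝ} {s : Set ℝ}
    (hq : IntegrableOn q s volume) (hψq : ∀ x, ψi x * q x = q' x)
    (hcc : c * ∫ x in s, q x = ∫ x in s, q' x) :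
    ∫ x in s, (c - ψi x) * q x = 0 := by
  by_cases hI : IntegrableOn (fun x => ψi x * q x) s volume
  · have e : (fun x => (c - ψi x) * q x) = fun x => c * q x - ψi x * q x := by
      funext x; ring
    rw [e, integral_sub (hq.const_mul c) hI, integral_const_mul]
    have e2 : ∫ x in s, ψi x * q x = ∫ x in s, q' x := by simp_rw [hψq]
    rw [e2, hcc, sub_self]
  · refine integral_undef fun hcon => hI ?_
    have h2 := (hq.const_mul c).sub hcon
    exact h2.congr (Filter.Eventually.of_forall fun x => by simp only [Pi.sub_apply]; ring)

/-- Factorization of an indicator integral across the coordinate split at `i`. -/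
lemma piece_int {n : ℕ} (q : Fin (n + 1) → ℝ → ℝ) (i : Fin (n + 1))
    (s : Set ℝ) (hs : MeasurableSet s) (r : ℝ) (w : ℝ → ℝ)
    (g : (Fin (n + 1) → ℝ) → ℝ)
    (hg : ∀ u, u i ∈ s → g u = g (Function.update u i r)) :
    ∫ u : Fin (n + 1) → ℝ, Set.indicator {u : Fin (n + 1) → ℝ | u i ∈ s}
        (fun u => g u * w (u i) * ∏ k, q k (u k)) u
      = (∫ x in s, w x * q i x) *
        ∫ y : Fin n → ℝ, g (i.insertNth r y) * ∏ k, q (i.succAbove k) (y k) := by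
  set c : ℝ → ℝ := Set.indicator s (fun x => w x * q i x) with hc
  set h : (Fin n → ℝ) → ℝ :=
    fun y => g (i.insertNth r y) * ∏ k, q (i.succAbove k) (y k) with hh
  have hfact : ∀ u : Fin (n + 1) → ℝ,
      Set.indicator {u : Fin (n + 1) → ℝ | u i ∈ s}
        (fun u => g u * w (u i) * ∏ k, q k (u k)) u = c (u i) * h (i.removeNth u) := by
    intro u
    by_cases hu : u i ∈ s
    · rw [Set.indicator_of_mem (show u ∈ {u : Fin (n + 1) → ℝ | u i ∈ s} from hu)]
      rw [hc, Set.indicator_of_mem hu]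
      have h1 : i.insertNth r (i.removeNth u) = Function.update u i r :=
        Fin.insertNth_removeNth i r u
      have h2 : ∏ k, q k (u k)
          = q i (u i) * ∏ k : Fin n, q (i.succAbove k) (u (i.succAbove k)) :=
        Fin.prod_univ_succAbove (fun k => q k (u k)) i
      show g u * w (u i) * ∏ k, q k (u k)
          = w (u i) * q i (u i) *
            (g (i.insertNth r (i.removeNth u)) * ∏ k : Fin n, q (i.succAbove k) (i.removeNth u k))
      have h3 : ∀ k : Fin n, i.removeNth u k = u (i.succAbove k) := fun k => rfl
      simp only [h3]
      rw [h1, ← hg u hu, h2]; ring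
    · rw [Set.indicator_of_notMem (show u ∉ {u : Fin (n + 1) → ℝ | u i ∈ s} from hu)]
      rw [hc, Set.indicator_of_notMem hu, zero_mul]
  rw [integral_congr_ae (Filter.Eventually.of_forall hfact)]
  have MP := volume_preserving_piFinSuccAbove (fun _ : Fin (n + 1) => ℝ) i
  have key : ∫ u : Fin (n + 1) → ℝ, c (u i) * h (i.removeNth u)
      = ∫ z : ℝ × (Fin n → ℝ), c z.1 * h z.2 := by
    rw [← MP.integral_comp' (fun z : ℝ × (Fin n → ℝ) => c z.1 * h z.2)]
    apply integral_congr_ae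
    refine Filter.Eventually.of_forall fun u => ?_
    rfl
  rw [key, Measure.volume_eq_prod, integral_prod_mul, hc, integral_indicator hs]

/-- Replacing the score by the CAPG score at coordinate `i` preserves integrability
and the value of the integral, for integrands that are clip-invariant at `i`. -/
lemma replace_one {n : ℕ} (q : Fin (n + 1) → ℝ → ℝ) (i : Fin (n + 1))
    (α β : ℝ) (hαβ : α < β) (cA cB : ℝ) (ψi ψb : ℝ → ℝ)
    (hψb : ∀ x, ψb x = if x ≤ α then cA else if x < β then ψi x else cB)
    (g : (Fin (n + 1) → ℝ) → ℝ)
    (hgA : ∀ u, u i ≤ α → g u = g (Function.update u i α))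
    (hgB : ∀ u, β ≤ u i → g u = g (Function.update u i β))
    (hI1 : Integrable (fun u : Fin (n + 1) → ℝ => g u * ψi (u i) * ∏ k, q k (u k)))
    (hI2 : Integrable (fun u : Fin (n + 1) → ℝ => g u * ∏ k, q k (u k)))
    (hzA : ∫ x in Iic α, (cA - ψi x) * q i x = 0)
    (hzB : ∫ x in Ici β, (cB - ψi x) * q i x = 0) :
    Integrable (fun u : Fin (n + 1) → ℝ => g u * ψb (u i) * ∏ k, q k (u k)) ∧
      ∫ u : Fin (n + 1) → ℝ, g u * ψb (u i) * ∏ k, q k (u k)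
        = ∫ u : Fin (n + 1) → ℝ, g u * ψi (u i) * ∏ k, q k (u k) := by
  set sA : Set (Fin (n + 1) → ℝ) := {u | u i ∈ Iic α} with hsA
  set sB : Set (Fin (n + 1) → ℝ) := {u | u i ∈ Ici β} with hsB
  have hmsA : MeasurableSet sA := measurable_pi_apply i measurableSet_Iic
  have hmsB : MeasurableSet sB := measurable_pi_apply i measurableSet_Ici
  set FA : (Fin (n + 1) → ℝ) → ℝ :=
    Set.indicator sA (fun u => g u * (cA - ψi (u i)) * ∏ k, q k (u k)) with hFA
  set FB : (Fin (n + 1) → ℝ) → ℝ :=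
    Set.indicator sB (fun u => g u * (cB - ψi (u i)) * ∏ k, q k (u k)) with hFB
  have hintA : Integrable FA := by
    have e : (fun u : Fin (n + 1) → ℝ => g u * (cA - ψi (u i)) * ∏ k, q k (u k))
        = fun u => cA * (g u * ∏ k, q k (u k)) - g u * ψi (u i) * ∏ k, q k (u k) := by
      funext u; ring
    rw [hFA, e]
    exact ((hI2.const_mul cA).sub hI1).indicator hmsA
  have hintB : Integrable FB := by
    have e : (fun u : Fin (n + 1) → ℝ => g u * (cB - ψi (u i)) * ∏ k, q k (u k))
        = fun u => cB * (g u * ∏ k, q k (u k)) - g u * ψi (u i) * ∏ k, q k (u k) := by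
      funext u; ring
    rw [hFB, e]
    exact ((hI2.const_mul cB).sub hI1).indicator hmsB
  have hsum : ∀ u : Fin (n + 1) → ℝ,
      g u * ψb (u i) * ∏ k, q k (u k)
        = g u * ψi (u i) * ∏ k, q k (u k) + (FA u + FB u) := by
    intro u
    rcases le_or_gt (u i) α with h | h
    · have hmA : u ∈ sA := h
      have hmB : u ∉ sB := fun hc => absurd (le_trans hc (h : u i ≤ α)) (not_le.2 hαβ)
      rw [hψb, if_pos h, hFA, hFB, Set.indicator_of_mem hmA, Set.indicator_of_notMem hmB]
      ring
    · have hmA : u ∉ sA := fun hc => absurd (hc : u i ≤ α) (not_le.2 h)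
      rcases lt_or_ge (u i) β with h2 | h2
      · have hmB : u ∉ sB := fun hc => absurd (hc : β ≤ u i) (not_le.2 h2)
        rw [hψb, if_neg (not_le.2 h), if_pos h2, hFA, hFB,
          Set.indicator_of_notMem hmA, Set.indicator_of_notMem hmB]
        ring
      · have hmB : u ∈ sB := h2
        rw [hψb, if_neg (not_le.2 h), if_neg (not_lt.2 h2), hFA, hFB,
          Set.indicator_of_notMem hmA, Set.indicator_of_mem hmB]
        ring
  have e1 : (fun u : Fin (n + 1) → ℝ => g u * ψb (u i) * ∏ k, q k (u k))
      = fun u => g u * ψi (u i) * ∏ k, q k (u k) + (FA u + FB u) := funext hsum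
  have hFA0 : ∫ u, FA u = 0 := by
    have hp := piece_int q i (Iic α) measurableSet_Iic α (fun x => cA - ψi x) g
      (fun u hu => hgA u hu)
    rw [hFA]
    rw [hp, hzA, zero_mul]
  have hFB0 : ∫ u, FB u = 0 := by
    have hp := piece_int q i (Ici β) measurableSet_Ici β (fun x => cB - ψi x) g
      (fun u hu => hgB u hu)
    rw [hFB]
    rw [hp, hzB, zero_mul]
  have hAB : Integrable (fun u => FA u + FB u) := hintA.add hintB
  constructor
  · rw [e1]; exact hI1.add hAB
  · rw [e1, integral_add hI1 hAB, integral_add hintA hintB, hFA0, hFB0]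
    ring

/-- for independent coordinates and clip-invariant `f`, the covariance
cross-terms are unchanged when the per-coordinate scores are replaced by CAPG scores:
`Cov[f ψ̄^{(i)}, f ψ̄^{(j)}] = Cov[f ψ^{(i)}, f ψ^{(j)}]` for `i ≠ j`. -/
theorem capg_covariance_unchanged
    (d : ℕ)
    (p : Fin d → ℝ → ℝ → ℝ) (p' ψ ψbar : Fin d → ℝ → ℝ) (f : (Fin d → ℝ) → ℝ)
    (θ α β : ℝ) (cA cB : Fin d → ℝ) (hαβ : α < β) (i j : Fin d) (hij : i ≠ j)
    (hpdf : ∀ i t, ∫ u, p i t u = 1) (hnn : ∀ i t u, 0 ≤ p i t u)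
    (hp' : ∀ i u, HasDerivAt (fun t => p i t u) (p' i u) θ)
    (hψ : ∀ i u, HasDerivAt (fun t => Real.log (p i t u)) (ψ i u) θ)
    (hswapA : ∀ i, HasDerivAt (fun t => ∫ u in Iic α, p i t u) (∫ u in Iic α, p' i u) θ)
    (hswapB : ∀ i, HasDerivAt (fun t => ∫ u in Ici β, p i t u) (∫ u in Ici β, p' i u) θ)
    (hposA : ∀ i, 0 < ∫ u in Iic α, p i θ u)
    (hltB : ∀ i, (∫ u in Iic β, p i θ u) < 1)
    (hcA : ∀ i, HasDerivAt (fun t => Real.log (∫ u in Iic α, p i t u)) (cA i) θ)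
    (hcB : ∀ i, HasDerivAt (fun t => Real.log (1 - ∫ u in Iic β, p i t u)) (cB i) θ)
    (hψbar : ∀ i u, ψbar i u = if u ≤ α then cA i else if u < β then ψ i u else cB i)
    (hclip : ∀ u : Fin d → ℝ, f u = f (fun i => max (min (u i) β) α))
    (hfmeas : Measurable f) (hfbdd : ∃ M : ℝ, ∀ u, |f u| ≤ M)
    (hint : Integrable
      (fun u : Fin d → ℝ => (f u)^2 * ψ i (u i) * ψ j (u j) * ∏ k, p k θ (u k)))
    (hint1 : ∀ k : Fin d,
      Integrable (fun u : Fin d → ℝ => f u * ψ k (u k) * ∏ l, p l θ (u l))) :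
    Covd (fun u => ∏ k, p k θ (u k))
        (fun u => f u * ψbar i (u i)) (fun u => f u * ψbar j (u j)) =
      Covd (fun u => ∏ k, p k θ (u k))
        (fun u => f u * ψ i (u i)) (fun u => f u * ψ j (u j)) := by
  obtain ⟨n, rfl⟩ : ∃ n, d = n + 1 := ⟨d - 1, by have := i.pos; omega⟩
  obtain ⟨M, hM⟩ := hfbdd
  have hMn : ∃ C : ℝ, ∀ u, ‖f u‖ ≤ C := ⟨M, fun u => by rw [Real.norm_eq_abs]; exact hM u⟩
  -- each one-dimensional density is integrable
  have hq : ∀ k t, Integrable (p k t) := by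
    intro k t
    by_contra h
    have h1 := hpdf k t
    rw [integral_undef h] at h1
    norm_num at h1
  have hQint : Integrable (fun u : Fin (n + 1) → ℝ => ∏ k, p k θ (u k)) :=
    Integrable.fintype_prod (f := fun k x => p k θ x) (fun k => hq k θ)
  have hfQ : Integrable (fun u : Fin (n + 1) → ℝ => f u * ∏ k, p k θ (u k)) :=
    hQint.bdd_mul hfmeas.aestronglyMeasurable (Filter.Eventually.of_forall hMn.choose_spec)
  -- score times density equals the derivative of the density
  have hψp : ∀ k x, ψ k x * p k θ x = p' k x := by
    intro k x
    rcases eq_or_lt_of_le (hnn k θ x) with h0 | hpos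
    · have hmin : IsLocalMin (fun t => p k t x) θ :=
        Filter.Eventually.of_forall fun t => by
          simpa [← h0] using hnn k t x
      have h' : p' k x = 0 := hmin.hasDerivAt_eq_zero (hp' k x)
      rw [← h0, h', mul_zero]
    · have hlog := (hp' k x).log hpos.ne'
      have he := (hψ k x).unique hlog
      rw [he]
      field_simp
  -- the lower tail integrals vanish
  have hccA : ∀ k, cA k * ∫ x in Iic α, p k θ x = ∫ x in Iic α, p' k x := by
    intro k
    have h1 := (hswapA k).log (hposA k).ne'
    have h2 := (hcA k).unique h1
    rw [h2, div_mul_cancel₀ _ (hposA k).ne']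
  have zA : ∀ k, ∫ x in Iic α, (cA k - ψ k x) * p k θ x = 0 := fun k =>
    tail_zero ((hq k θ).integrableOn) (hψp k) (hccA k)
  -- the upper tail integrals vanish
  have hGB : ∀ k t, 1 - (∫ u in Iic β, p k t u) = ∫ u in Ici β, p k t u := by
    intro k t
    have hsplit := intervalIntegral.integral_Iic_add_Ioi (b := β) ((hq k t).integrableOn) ((hq k t).integrableOn)
    rw [integral_Ici_eq_integral_Ioi]
    have h1 := hpdf k t
    linarith
  have hcB' : ∀ k, HasDerivAt (fun t => Real.log (∫ u in Ici β, p k t u)) (cB k) θ := by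
    intro k
    have h0 := hcB k
    have e : (fun t => Real.log (1 - ∫ u in Iic β, p k t u))
        = fun t => Real.log (∫ u in Ici β, p k t u) := funext fun t => by rw [hGB k t]
    rwa [e] at h0
  have hQBpos : ∀ k, 0 < ∫ u in Ici β, p k θ u := by
    intro k
    rw [← hGB k θ]
    linarith [hltB k]
  have hccB : ∀ k, cB k * ∫ x in Ici β, p k θ x = ∫ x in Ici β, p' k x := by
    intro k
    have h1 := (hswapB k).log (hQBpos k).ne'
    have h2 := (hcB' k).unique h1
    rw [h2, div_mul_cancel₀ _ (hQBpos k).ne']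
  have zB : ∀ k, ∫ x in Ici β, (cB k - ψ k x) * p k θ x = 0 := fun k =>
    tail_zero ((hq k θ).integrableOn) (hψp k) (hccB k)
  -- clip invariance in a single coordinate
  have hcliplem : ∀ x : ℝ, max (min (max (min x β) α) β) α = max (min x β) α := by
    intro x
    have h1 : α ≤ max (min x β) α := le_max_right _ _
    have h2 : max (min x β) α ≤ β := max_le (le_trans (min_le_right _ _) le_rfl) hαβ.le
    rw [min_eq_left h2, max_eq_left h1]
  have hfupd : ∀ (k : Fin (n + 1)) (u : Fin (n + 1) → ℝ) (r : ℝ),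
      max (min (u k) β) α = r → f u = f (Function.update u k r) := by
    intro k u r hr
    rw [hclip u, hclip (Function.update u k r)]
    congr 1
    funext l
    rcases eq_or_ne l k with rfl | hlk
    · rw [Function.update_self, ← hr, hcliplem]
    · rw [Function.update_of_ne hlk]
  have hfupdA : ∀ (k : Fin (n + 1)) (u : Fin (n + 1) → ℝ), u k ≤ α →
      f u = f (Function.update u k α) := by
    intro k u h
    exact hfupd k u α (by rw [min_eq_left (h.trans hαβ.le), max_eq_right h])
  have hfupdB : ∀ (k : Fin (n + 1)) (u : Fin (n + 1) → ℝ), β ≤ u k →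
      f u = f (Function.update u k β) := by
    intro k u h
    exact hfupd k u β (by rw [min_eq_right h, max_eq_left hαβ.le])
  -- mean replacement at i
  obtain ⟨ibar_i, eq_i⟩ := replace_one (fun k => p k θ) i α β hαβ (cA i) (cB i) (ψ i) (ψbar i)
    (hψbar i) f (fun u hu => hfupdA i u hu) (fun u hu => hfupdB i u hu)
    (hint1 i) hfQ (zA i) (zB i)
  -- mean replacement at j
  obtain ⟨ibar_j, eq_j⟩ := replace_one (fun k => p k θ) j α β hαβ (cA j) (cB j) (ψ j) (ψbar j)
    (hψbar j) f (fun u hu => hfupdA j u hu) (fun u hu => hfupdB j u hu)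
    (hint1 j) hfQ (zA j) (zB j)
  -- cross replacement, first at j with g = f² ψᵢ
  have hgA3 : ∀ u : Fin (n + 1) → ℝ, u j ≤ α →
      f u ^ 2 * ψ i (u i) = f (Function.update u j α) ^ 2 * ψ i (Function.update u j α i) := by
    intro u hu
    rw [Function.update_of_ne hij, ← hfupdA j u hu]
  have hgB3 : ∀ u : Fin (n + 1) → ℝ, β ≤ u j →
      f u ^ 2 * ψ i (u i) = f (Function.update u j β) ^ 2 * ψ i (Function.update u j β i) := by
    intro u hu
    rw [Function.update_of_ne hij, ← hfupdB j u hu]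
  have hI13 : Integrable (fun u : Fin (n + 1) → ℝ =>
      (f u ^ 2 * ψ i (u i)) * ψ j (u j) * ∏ k, p k θ (u k)) := by
    exact hint.congr (Filter.Eventually.of_forall fun u => by ring)
  have hI23 : Integrable (fun u : Fin (n + 1) → ℝ =>
      (f u ^ 2 * ψ i (u i)) * ∏ k, p k θ (u k)) := by
    have := (hint1 i).bdd_mul hfmeas.aestronglyMeasurable (Filter.Eventually.of_forall hMn.choose_spec)
    exact this.congr (Filter.Eventually.of_forall fun u => by ring)
  obtain ⟨ibar_c1, eq_c1⟩ := replace_one (fun k => p k θ) j α β hαβ (cA j) (cB j) (ψ j) (ψbar j)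
    (hψbar j) (fun u => f u ^ 2 * ψ i (u i)) hgA3 hgB3 hI13 hI23 (zA j) (zB j)
  -- cross replacement, then at i with g = f² ψ̄ⱼ
  have hgA4 : ∀ u : Fin (n + 1) → ℝ, u i ≤ α →
      f u ^ 2 * ψbar j (u j)
        = f (Function.update u i α) ^ 2 * ψbar j (Function.update u i α j) := by
    intro u hu
    rw [Function.update_of_ne hij.symm, ← hfupdA i u hu]
  have hgB4 : ∀ u : Fin (n + 1) → ℝ, β ≤ u i →
      f u ^ 2 * ψbar j (u j)
        = f (Function.update u i β) ^ 2 * ψbar j (Function.update u i β j) := by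
    intro u hu
    rw [Function.update_of_ne hij.symm, ← hfupdB i u hu]
  have hI14 : Integrable (fun u : Fin (n + 1) → ℝ =>
      (f u ^ 2 * ψbar j (u j)) * ψ i (u i) * ∏ k, p k θ (u k)) := by
    exact ibar_c1.congr (Filter.Eventually.of_forall fun u => by ring)
  have hI24 : Integrable (fun u : Fin (n + 1) → ℝ =>
      (f u ^ 2 * ψbar j (u j)) * ∏ k, p k θ (u k)) := by
    have := ibar_j.bdd_mul hfmeas.aestronglyMeasurable (Filter.Eventually.of_forall hMn.choose_spec)
    exact this.congr (Filter.Eventually.of_forall fun u => by ring)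
  obtain ⟨_, eq_c2⟩ := replace_one (fun k => p k θ) i α β hαβ (cA i) (cB i) (ψ i) (ψbar i)
    (hψbar i) (fun u => f u ^ 2 * ψbar j (u j)) hgA4 hgB4 hI14 hI24 (zA i) (zB i)
  -- assemble
  simp only [Covd, Ed]
  have hcross : ∫ u : Fin (n + 1) → ℝ,
      (f u * ψbar i (u i) * (f u * ψbar j (u j))) * ∏ k, p k θ (u k)
      = ∫ u : Fin (n + 1) → ℝ, (f u * ψ i (u i) * (f u * ψ j (u j))) * ∏ k, p k θ (u k) := by
    calc ∫ u : Fin (n + 1) → ℝ,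
        (f u * ψbar i (u i) * (f u * ψbar j (u j))) * ∏ k, p k θ (u k)
        = ∫ u : Fin (n + 1) → ℝ,
          (f u ^ 2 * ψbar j (u j)) * ψbar i (u i) * ∏ k, p k θ (u k) :=
        integral_congr_ae (Filter.Eventually.of_forall fun u => by ring)
      _ = ∫ u : Fin (n + 1) → ℝ,
          (f u ^ 2 * ψbar j (u j)) * ψ i (u i) * ∏ k, p k θ (u k) := eq_c2
      _ = ∫ u : Fin (n + 1) → ℝ,
          (f u ^ 2 * ψ i (u i)) * ψbar j (u j) * ∏ k, p k θ (u k) :=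
        integral_congr_ae (Filter.Eventually.of_forall fun u => by ring)
      _ = ∫ u : Fin (n + 1) → ℝ,
          (f u ^ 2 * ψ i (u i)) * ψ j (u j) * ∏ k, p k θ (u k) := eq_c1
      _ = ∫ u : Fin (n + 1) → ℝ,
          (f u * ψ i (u i) * (f u * ψ j (u j))) * ∏ k, p k θ (u k) :=
        integral_congr_ae (Filter.Eventually.of_forall fun u => by ring)
  rw [hcross, eq_i, eq_j]
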